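/- Let n ≥ 3, let K ⊆ ℝⁿ be a proper subdual cone, let A ∈ ℝ^{n×n} be symmetric, and let {v¹, …, vⁿ} be an orthonormal system of eigenvectors of A with A v¹ = λ v¹ and A vʲ = μ vʲ for j = 2, …, n, where λ < μ. If v¹ ∈ K*, then the sublevel set [φ_A ≤ c] = {x ∈ int(K) : ⟨Ax, x⟩ ≤ c‖x‖²} is convex for every c ∈ ℝ (i.e., q_A is spherically quasi-convex). -/
import Mathlib


open scoped RealInnerProductSpace

/-- The quadratic form `x ↦ ⟨A x, x⟩` associated with a matrix `A`. -/
noncomputable def quadForm {n : ℕ} (A : Matrix (Fin n) (Fin n) ℝ)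
    (x : EuclideanSpace ℝ (Fin n)) : ℝ :=
  ⟪Matrix.toEuclideanLin A x, x⟫

/-- `K` is a cone: closed under multiplication by positive scalars. -/
def IsCone {n : ℕ} (K : Set (EuclideanSpace ℝ (Fin n))) : Prop :=
  ∀ ⦃t : ℝ⦄, 0 < t → ∀ ⦃x⦄, x ∈ K → t • x ∈ K

/-- A proper cone: a pointed closed convex cone with nonempty interior. -/
def IsProperCone {n : ℕ} (K : Set (EuclideanSpace ℝ (Fin n))) : Prop :=
  IsCone K ∧ Convex ℝ K ∧ IsClosed K ∧ K ∩ (-K) ⊆ {0} ∧ (interior K).Nonempty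

/-- The dual cone `K* = {u : ⟨u, y⟩ ≥ 0 for all y ∈ K}`. -/
def dualCone {n : ℕ} (K : Set (EuclideanSpace ℝ (Fin n))) : Set (EuclideanSpace ℝ (Fin n)) :=
  {u | ∀ y ∈ K, 0 ≤ ⟪u, y⟫}

/-- The sublevel set `[φ_A ≤ c] = {x ∈ int K : ⟨A x, x⟩ ≤ c ‖x‖²}`. -/
noncomputable def sublevel {n : ℕ} (A : Matrix (Fin n) (Fin n) ℝ)
    (K : Set (EuclideanSpace ℝ (Fin n))) (c : ℝ) : Set (EuclideanSpace ℝ (Fin n)) :=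
  {x ∈ interior K | quadForm A x ≤ c * ‖x‖ ^ 2}

/-- Corollary 5 of the paper: if `A` has eigenvalues `λ < μ = ⋯ = μ` with `v¹ ∈ K*`,
then all sublevel sets `[φ_A ≤ c]` are convex (i.e. `q_A` is spherically quasi-convex). -/
theorem stmt17 (n : ℕ) [NeZero n] (hn : 3 ≤ n)
    (K : Set (EuclideanSpace ℝ (Fin n))) (hK : IsProperCone K) (hsub : K ⊆ dualCone K)
    (A : Matrix (Fin n) (Fin n) ℝ) (hA : A.IsSymm)
    (v : Fin n → EuclideanSpace ℝ (Fin n)) (hv : Orthonormal ℝ v)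
    (lam mu : ℝ) (hlm : lam < mu)
    (h1 : Matrix.toEuclideanLin A (v 0) = lam • v 0)
    (hrest : ∀ i : Fin n, i ≠ 0 → Matrix.toEuclideanLin A (v i) = mu • v i)
    (hv1 : v 0 ∈ dualCone K) :
    ∀ c : ℝ, Convex ℝ (sublevel A K c) := by
  -- Step 1: the quadratic form decomposes as μ‖x‖² + (λ-μ)⟪v₀,x⟫².
  have quad : ∀ x : EuclideanSpace ℝ (Fin n),
      quadForm A x = mu * ‖x‖^2 + (lam - mu) * ⟪v 0, x⟫^2 := by
    have hcard : Fintype.card (Fin n) = Module.finrank ℝ (EuclideanSpace ℝ (Fin n)) := by simp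
    let b := basisOfOrthonormalOfCardEqFinrank hv hcard
    have hb : ⇑b = v := coe_basisOfOrthonormalOfCardEqFinrank hv hcard
    let S : EuclideanSpace ℝ (Fin n) →ₗ[ℝ] EuclideanSpace ℝ (Fin n) :=
      mu • LinearMap.id + LinearMap.smulRight ((lam - mu) • (innerSL ℝ (v 0)).toLinearMap) (v 0)
    have hSx : ∀ x, S x = mu • x + ((lam - mu) * ⟪v 0, x⟫) • v 0 := by
      intro x
      simp [S, LinearMap.smulRight_apply]
    have hS : Matrix.toEuclideanLin A = S := by
      apply b.ext
      intro i
      have hbi : b i = v i := by rw [hb]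
      rw [hbi, hSx]
      by_cases hi : i = 0
      · subst hi
        have hvv : ⟪v 0, v 0⟫ = (1:ℝ) := by
          have h := hv.1 0
          rw [real_inner_self_eq_norm_sq, h]; norm_num
        rw [h1, hvv]
        module
      · have hvv : ⟪v 0, v i⟫ = (0:ℝ) := hv.2 (Ne.symm hi)
        rw [hrest i hi, hvv]
        module
    intro x
    unfold quadForm
    rw [hS, hSx, inner_add_left, real_inner_smul_left, real_inner_smul_left,
      real_inner_self_eq_norm_sq]
    ring
  have hconv : Convex ℝ (interior K) := hK.2.1.interior
  intro c
  rcases le_or_gt mu c with hc | hc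
  · -- c ≥ μ : the sublevel set is all of int K.
    have : sublevel A K c = interior K := by
      ext z
      simp only [sublevel, Set.mem_setOf_eq, Set.mem_sep_iff]
      refine ⟨fun h => h.1, fun h => ⟨h, ?_⟩⟩
      rw [quad z]
      nlinarith [sq_nonneg ⟪v 0, z⟫, sq_nonneg ‖z‖]
    rw [this]; exact hconv
  · -- c < μ : ice-cream cone description.
    have hml : (0:ℝ) < mu - lam := by linarith
    set α := Real.sqrt ((mu - c)/(mu - lam)) with hαdef
    have hα : 0 < α := Real.sqrt_pos.2 (div_pos (by linarith) hml)
    have hα2 : α^2 * (mu - lam) = mu - c := by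
      rw [hαdef, Real.sq_sqrt (le_of_lt (div_pos (by linarith) hml))]
      field_simp
    have equiv : ∀ z : EuclideanSpace ℝ (Fin n), 0 ≤ ⟪v 0, z⟫ →
        (quadForm A z ≤ c * ‖z‖^2 ↔ α * ‖z‖ ≤ ⟪v 0, z⟫) := by
      intro z hz
      rw [quad z]
      constructor
      · intro h
        by_contra hcon
        push_neg at hcon
        nlinarith [mul_self_lt_mul_self hz hcon, sq_nonneg ‖z‖, norm_nonneg z]
      · intro h
        nlinarith [mul_self_le_mul_self (mul_nonneg hα.le (norm_nonneg z)) h, sq_nonneg ‖z‖]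
    intro x hx y hy a bb ha hb hab
    obtain ⟨hx1, hx2⟩ := hx
    obtain ⟨hy1, hy2⟩ := hy
    have hz1 : a • x + bb • y ∈ interior K := hconv hx1 hy1 ha hb hab
    refine ⟨hz1, ?_⟩
    have hvx : 0 ≤ ⟪v 0, x⟫ := hv1 x (interior_subset hx1)
    have hvy : 0 ≤ ⟪v 0, y⟫ := hv1 y (interior_subset hy1)
    have hvz : 0 ≤ ⟪v 0, a • x + bb • y⟫ := hv1 _ (interior_subset hz1)
    rw [equiv x hvx] at hx2
    rw [equiv y hvy] at hy2
    rw [equiv _ hvz]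
    have hinner : ⟪v 0, a • x + bb • y⟫ = a * ⟪v 0, x⟫ + bb * ⟪v 0, y⟫ := by
      rw [inner_add_right, real_inner_smul_right, real_inner_smul_right]
    have hnorm : ‖a • x + bb • y‖ ≤ a * ‖x‖ + bb * ‖y‖ := by
      calc ‖a • x + bb • y‖ ≤ ‖a • x‖ + ‖bb • y‖ := norm_add_le _ _
        _ = a * ‖x‖ + bb * ‖y‖ := by
          rw [norm_smul, norm_smul, Real.norm_of_nonneg ha, Real.norm_of_nonneg hb]
    rw [hinner]
    calc α * ‖a • x + bb • y‖ ≤ α * (a * ‖x‖ + bb * ‖y‖) :=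
          mul_le_mul_of_nonneg_left hnorm hα.le
      _ = a * (α * ‖x‖) + bb * (α * ‖y‖) := by ring
      _ ≤ a * ⟪v 0, x⟫ + bb * ⟪v 0, y⟫ :=
          add_le_add (mul_le_mul_of_nonneg_left hx2 ha) (mul_le_mul_of_nonneg_left hy2 hb)
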